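/- Let n ≥ 3, let m ∈ {2,3,…,n−1}, and let R = {2,3,…,n−m} ∪ {n}. Then the restricted incomplete rotator graph RIR_n(R,m) is not strongly connected. In particular, there is no arc from any node whose last m symbols are 1 2 ⋯ m (in that order) to any node outside this set of strings. -/

import Mathlib

open Equiv

/-- The prefix-rotation `σ_r = (1 2 ⋯ r)` of positions, 0-indexed as a
permutation of `Fin n` (it sends position `i` to `i+1` for `i < r-1`,
sends position `r-1` to `0`, and fixes all positions `≥ r`). -/
def sigmaRot (n r : ℕ) : Equiv.Perm (Fin n) :=
  if h : r - 1 < n then Fin.cycleRange ⟨r - 1, h⟩ else 1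

/-- The permutation `σ_{r₁}σ_{r₂}⋯σ_{r_i}` (composed left-to-right) given by the
first `i` entries of the sequence `S`. -/
def partialProd (n : ℕ) (S : List ℕ) (i : ℕ) : Equiv.Perm (Fin n) :=
  ((S.take i).map (sigmaRot n)).prod

/-- `S` is a Hamilton sequence for the restricted rotator graph `RR_n(R)`. -/
def IsHamiltonSeq (n : ℕ) (R : Set ℕ) (S : List ℕ) : Prop :=
  S.length = Nat.factorial n ∧
  (∀ r ∈ S, r ∈ R) ∧
  (∀ i < Nat.factorial n, ∀ j < Nat.factorial n,
      partialProd n S i = partialProd n S j → i = j) ∧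
  partialProd n S S.length = 1

/-- The value (0-indexed symbol) at the last position of the string `a`;
the one-line-notation symbol there is `lastVal a + 1`. -/
def lastVal {n : ℕ} (a : Equiv.Perm (Fin n)) : ℕ :=
  if h : 0 < n then ((a ⟨n - 1, Nat.sub_lt h Nat.one_pos⟩ : Fin n) : ℕ) else 0

/-- Arc relation of the restricted incomplete rotator graph `RIR_n(R,m)`:
both endpoints have last symbol `≤ m` and `b = a·σ_r` for some `r ∈ R`. -/
def RIRAdj (n m : ℕ) (R : Set ℕ) (a b : Equiv.Perm (Fin n)) : Prop :=
  lastVal a < m ∧ lastVal b < m ∧ ∃ r ∈ R, b = a * sigmaRot n r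

/-- `RIR_n(R,m)` is strongly connected. -/
def StronglyConnectedRIR (n m : ℕ) (R : Set ℕ) : Prop :=
  ∀ a b : Equiv.Perm (Fin n), lastVal a < m → lastVal b < m →
    Relation.ReflTransGen (RIRAdj n m R) a b

/-- The reuse operation: replace each entry `r` by `n,…,n,n+1-r` (`n-1` copies of `n`). -/
def reuseOp (n : ℕ) (S : List ℕ) : List ℕ :=
  (S.map (fun r => List.replicate (n - 1) n ++ [n + 1 - r])).flatten

/-- Corbett's reuse sequences: `C₁ = (1)` and `C_k = reuse_k(C_{k-1})`. -/
def corbettC : ℕ → List ℕ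
  | 0 => []
  | 1 => [1]
  | k + 2 => reuseOp (k + 2) (corbettC (k + 1))

/-- The recycle operation: replace each entry `r` by
`n, n, n-1, …, n-1, n, …, n` (`r-1` copies of `n-1`, then `n-r-1` copies of `n`). -/
def recycleOp (n : ℕ) (S : List ℕ) : List ℕ :=
  (S.map (fun r => n :: n :: (List.replicate (r - 1) (n - 1) ++ List.replicate (n - r - 1) n))).flatten

/-- The canonical recycle sequences: `D₁ = (1)` and `D_k = recycle_k(D_{k-1})`. -/
def recycleD : ℕ → List ℕ
  | 0 => []
  | 1 => [1]
  | k + 2 => recycleOp (k + 2) (recycleD (k + 1))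

/-- The rewind operation `rewind_m(S)` (with `S = T, n-1, n-1`):
`(T,n-1,n)`, then `m-2` copies of `(T,n)`, then `(T,n-1,n)`, then `m-2` copies of `n`. -/
def rewindOp (n m : ℕ) (S : List ℕ) : List ℕ :=
  (S.dropLast.dropLast ++ [n - 1, n])
    ++ (List.replicate (m - 2) (S.dropLast.dropLast ++ [n])).flatten
    ++ (S.dropLast.dropLast ++ [n - 1, n])
    ++ List.replicate (m - 2) n

/-- The canonical rewind sequences: `W₂ = (2,2)` and `W_k = rewind_k(W_{k-1})`. -/
def rewindW : ℕ → List ℕ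
  | 0 => []
  | 1 => []
  | 2 => [2, 2]
  | k + 3 => rewindOp (k + 3) (k + 3) (rewindW (k + 2))

/-- `S` is a Hamilton sequence for the restricted incomplete rotator graph `RIR_n(R,m)`,
starting from the string `n n-1 ⋯ 1` (which is `Fin.revPerm`). -/
def IsHamiltonSeqRIR (n m : ℕ) (R : Set ℕ) (S : List ℕ) : Prop :=
  S.length = m * Nat.factorial (n - 1) ∧
  (∀ r ∈ S, r ∈ R) ∧
  (∀ i < S.length, ∀ j < S.length,
      Fin.revPerm * partialProd n S i = Fin.revPerm * partialProd n S j → i = j) ∧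
  {b : Equiv.Perm (Fin n) | ∃ i < S.length, b = Fin.revPerm * partialProd n S i}
    = {b : Equiv.Perm (Fin n) | lastVal b < m} ∧
  Fin.revPerm * partialProd n S S.length = Fin.revPerm

/-- The cyclic shift `shift²` moving the first two entries to the end. -/
def shift2 (S : List ℕ) : List ℕ := S.drop 2 ++ S.take 2

/-- For `n ≥ 3`, `m ∈ {2,…,n-1}` and `R = {2,…,n-m} ∪ {n}`, the restricted
incomplete rotator graph `RIR_n(R,m)` is not strongly connected; in particular there is no arc
from any node whose last `m` symbols are `1 2 ⋯ m` (in that order) to any node outside this set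
of strings (symbol `j+1` is represented by the `Fin n` value `j`). -/
theorem stmt3 (n m : ℕ) (hn : 3 ≤ n) (hm2 : 2 ≤ m) (hm : m ≤ n - 1) :
    ¬ StronglyConnectedRIR n m ({r | 2 ≤ r ∧ r ≤ n - m} ∪ {n}) ∧
    ∀ a b : Equiv.Perm (Fin n),
      (∀ j : ℕ, ∀ hj : j < m, ((a ⟨n - m + j, by omega⟩ : Fin n) : ℕ) = j) →
      ¬ (∀ j : ℕ, ∀ hj : j < m, ((b ⟨n - m + j, by omega⟩ : Fin n) : ℕ) = j) →
      ¬ RIRAdj n m ({r | 2 ≤ r ∧ r ≤ n - m} ∪ {n}) a b := by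
  obtain ⟨k, rfl⟩ : ∃ k, n = k + 1 := ⟨n - 1, by omega⟩
  have hkey : ∀ a b : Equiv.Perm (Fin (k+1)),
      (∀ j : ℕ, ∀ hj : j < m, ((a ⟨k + 1 - m + j, by omega⟩ : Fin (k+1)) : ℕ) = j) →
      RIRAdj (k+1) m ({r | 2 ≤ r ∧ r ≤ k + 1 - m} ∪ {(k+1)}) a b →
      (∀ j : ℕ, ∀ hj : j < m, ((b ⟨k + 1 - m + j, by omega⟩ : Fin (k+1)) : ℕ) = j) := by
    intro a b ha hadj
    obtain ⟨hla, hlb, r, hr, rfl⟩ := hadj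
    rcases hr with ⟨hr2, hrm⟩ | hrn
    · -- r ≤ n - m : σ_r fixes the last m positions
      intro j hj
      have hlt : r - 1 < k + 1 := by omega
      rw [sigmaRot, dif_pos hlt, Equiv.Perm.mul_apply,
        Fin.cycleRange_of_gt (show (⟨r-1, hlt⟩ : Fin (k+1)) < ⟨k + 1 - m + j, by omega⟩ from
          by simp only [Fin.mk_lt_mk]; omega)]
      exact ha j hj
    · -- r = n : impossible, since lastVal b = a 0 ≥ m
      exfalso
      simp only [Set.mem_singleton_iff] at hrn
      subst hrn
      have hlt : k + 1 - 1 < k + 1 := by omega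
      have hlast : lastVal (a * sigmaRot (k+1) (k+1)) = ((a 0 : Fin (k+1)) : ℕ) := by
        rw [lastVal, dif_pos (by omega : 0 < k + 1)]
        rw [sigmaRot, dif_pos hlt, Equiv.Perm.mul_apply,
          Fin.cycleRange_of_eq
            (rfl : (⟨k + 1 - 1, Nat.sub_lt (by omega) Nat.one_pos⟩ : Fin (k+1)) = ⟨k + 1 - 1, hlt⟩)]
      rw [hlast] at hlb
      have := ha ((a 0 : Fin (k+1)) : ℕ) hlb
      have heq : a ⟨k + 1 - m + ((a 0 : Fin (k+1)) : ℕ), by omega⟩ = a 0 := Fin.ext this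
      have := a.injective heq
      have hval := congrArg Fin.val this
      simp only [Fin.val_mk, Fin.val_zero] at hval
      omega
  constructor
  · -- not strongly connected
    intro hsc
    open Fin.NatCast in set a : Equiv.Perm (Fin (k+1)) := Equiv.addLeft ((m : ℕ) : Fin (k+1)) with ha_def
    have ha : ∀ j : ℕ, ∀ hj : j < m, ((a ⟨k + 1 - m + j, by omega⟩ : Fin (k+1)) : ℕ) = j := by
      intro j hj
      open Fin.NatCast in show (((m : ℕ) : Fin (k+1)) + ⟨k + 1 - m + j, by omega⟩ : Fin (k+1)).val = j
      rw [Fin.add_def]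
      simp only [Fin.val_natCast]
      rw [Nat.mod_eq_of_lt (by omega : m < k + 1)]
      have h1 : m + (k + 1 - m + j) = (k + 1) + j := by omega
      rw [h1, Nat.add_mod_left, Nat.mod_eq_of_lt (by omega)]
    set b : Equiv.Perm (Fin (k+1)) := Equiv.swap ⟨0, by omega⟩ ⟨k, by omega⟩ with hb_def
    have hbval : b ⟨k + 1 - m, by omega⟩ = ⟨k + 1 - m, by omega⟩ := by
      apply Equiv.swap_apply_of_ne_of_ne <;> · simp only [ne_eq, Fin.mk.injEq]; omega
    have hla : lastVal a < m := by
      rw [lastVal, dif_pos (by omega : 0 < k + 1)]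
      have : (⟨k + 1 - 1, Nat.sub_lt (by omega) Nat.one_pos⟩ : Fin (k+1)) =
          ⟨k + 1 - m + (m - 1), by omega⟩ := by simp only [Fin.mk.injEq]; omega
      rw [this, ha (m-1) (by omega)]
      omega
    have hlb : lastVal b < m := by
      rw [lastVal, dif_pos (by omega : 0 < k + 1)]
      have : (⟨k + 1 - 1, Nat.sub_lt (by omega) Nat.one_pos⟩ : Fin (k+1)) =
          ⟨k, by omega⟩ := by simp
      rw [this, hb_def, Equiv.swap_apply_right]
      simp only [Fin.val_mk]
      omega
    have hpath := hsc a b hla hlb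
    have hclosed : ∀ c, Relation.ReflTransGen
        (RIRAdj (k+1) m ({r | 2 ≤ r ∧ r ≤ k + 1 - m} ∪ {(k+1)})) a c →
        (∀ j : ℕ, ∀ hj : j < m, ((c ⟨k + 1 - m + j, by omega⟩ : Fin (k+1)) : ℕ) = j) := by
      intro c hc
      induction hc with
      | refl => exact ha
      | tail h1 h2 ih => exact hkey _ _ ih h2
    have hb0 := hclosed b hpath 0 (by omega)
    rw [show (⟨k + 1 - m + 0, by omega⟩ : Fin (k+1)) = ⟨k + 1 - m, by omega⟩ from by simp,
      hbval] at hb0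
    simp only [Fin.val_mk] at hb0
    omega
  · intro a b ha hnb hadj
    exact hnb (hkey a b ha hadj)
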